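/- Let (Ω, ℱ, P) be a probability space, W an integrable real random variable, and q a real number. For every measurable set E ⊆ Ω with P(E) = P(W ≤ q), it holds that E[W·𝟙{W ≤ q}] ≤ E[W·𝟙_E], i.e. the lower-tail event {W ≤ q} minimizes the truncated expectation among all events of the same probability. -/

import Mathlib

open MeasureTheory

private lemma aux_lower_tail
    {Ω : Type*} [MeasurableSpace Ω] (P : Measure Ω) [IsProbabilityMeasure P]
    (W : Ω → ℝ) (hWm : Measurable W) (hW : Integrable W P) (q : ℝ)
    (E : Set Ω) (hE : MeasurableSet E)
    (hPE : P E = P {ω | W ω ≤ q}) :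
    ∫ ω, Set.indicator {ω | W ω ≤ q} W ω ∂P ≤ ∫ ω, Set.indicator E W ω ∂P := by
  set A : Set Ω := {ω | W ω ≤ q} with hAdef
  have hA : MeasurableSet A := measurableSet_le hWm measurable_const
  rw [integral_indicator hA, integral_indicator hE]
  have hIA : IntegrableOn W A P := hW.integrableOn
  have hIE : IntegrableOn W E P := hW.integrableOn
  have h1 : ∫ ω in A ∩ E, W ω ∂P + ∫ ω in A \ E, W ω ∂P = ∫ ω in A, W ω ∂P :=
    integral_inter_add_diff hE hIA
  have h2 : ∫ ω in E ∩ A, W ω ∂P + ∫ ω in E \ A, W ω ∂P = ∫ ω in E, W ω ∂P :=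
    integral_inter_add_diff hA hIE
  rw [← h1, ← h2, Set.inter_comm E A]
  refine add_le_add le_rfl ?_
  -- measure equality
  have hm : P (A \ E) = P (E \ A) := by
    have m1 : P (A ∩ E) + P (A \ E) = P A := measure_inter_add_diff A hE
    have m2 : P (E ∩ A) + P (E \ A) = P E := measure_inter_add_diff E hA
    rw [Set.inter_comm E A, hPE] at m2
    have := m1.trans m2.symm
    exact (ENNReal.add_right_inj (measure_ne_top P _)).1 this
  have hdA : MeasurableSet (A \ E) := hA.diff hE
  have hdE : MeasurableSet (E \ A) := hE.diff hA
  calc ∫ ω in A \ E, W ω ∂P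
      ≤ ∫ _ω in A \ E, q ∂P := by
        apply setIntegral_mono_on hW.integrableOn (integrableOn_const (measure_ne_top P _)) hdA
        intro x hx
        exact hx.1
    _ = (P (A \ E)).toReal * q := by rw [setIntegral_const]; rfl
    _ = (P (E \ A)).toReal * q := by rw [hm]
    _ = ∫ _ω in E \ A, q ∂P := by rw [setIntegral_const]; rfl
    _ ≤ ∫ ω in E \ A, W ω ∂P := by
        apply setIntegral_mono_on (integrableOn_const (measure_ne_top P _)) hW.integrableOn hdE
        intro x hx
        exact le_of_not_ge hx.2

/-- Lower-tail extremality: among all events `E` with the same probability as `{W ≤ q}`,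
the event `{W ≤ q}` minimizes the truncated expectation `E[W·𝟙_E]`. -/
theorem lower_tail_minimizes_truncated_expectation
    {Ω : Type*} [MeasurableSpace Ω] (P : Measure Ω) [IsProbabilityMeasure P]
    (W : Ω → ℝ) (hW : Integrable W P) (q : ℝ)
    (E : Set Ω) (hE : MeasurableSet E)
    (hPE : P E = P {ω | W ω ≤ q}) :
    ∫ ω, Set.indicator {ω | W ω ≤ q} W ω ∂P ≤ ∫ ω, Set.indicator E W ω ∂P := by
  set W' : Ω → ℝ := hW.1.mk W with hW'def
  have hae : W =ᵐ[P] W' := hW.1.ae_eq_mk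
  have hWm' : Measurable W' := hW.1.measurable_mk
  have hW' : Integrable W' P := hW.congr hae
  have hsets : {ω | W ω ≤ q} =ᵐ[P] {ω | W' ω ≤ q} := by
    filter_upwards [hae] with ω h
    show (W ω ≤ q) = (W' ω ≤ q)
    rw [h]
  have hPE' : P E = P {ω | W' ω ≤ q} := hPE.trans (measure_congr hsets)
  have e1 : ∫ ω, Set.indicator {ω | W ω ≤ q} W ω ∂P
      = ∫ ω, Set.indicator {ω | W' ω ≤ q} W' ω ∂P := by
    apply integral_congr_ae
    filter_upwards [hae] with ω h
    by_cases hx : W ω ≤ q <;>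
      simp [Set.indicator_apply, Set.mem_setOf_eq, hx, h, h ▸ hx]
  have e2 : ∫ ω, Set.indicator E W ω ∂P = ∫ ω, Set.indicator E W' ω ∂P := by
    apply integral_congr_ae
    filter_upwards [hae] with ω h
    by_cases hx : ω ∈ E <;> simp [Set.indicator_apply, hx, h]
  rw [e1, e2]
  exact aux_lower_tail P W' hWm' hW' q E hE hPE'
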